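/- Let H be a complex Hilbert space and let M and N be closed subspaces of H such that M + N is closed in H. Then the orthogonal complement of M ∩ N equals M^⊥ + N^⊥ (in particular M^⊥ + N^⊥ is a closed subspace). -/

import Mathlib

variable {H : Type*} [NormedAddCommGroup H] [InnerProductSpace ℂ H] [CompleteSpace H]

private lemma key_mem (M N : Submodule ℂ H)
    (hM : IsClosed (M : Set H)) (hN : IsClosed (N : Set H))
    (hMN : IsClosed ((M ⊔ N : Submodule ℂ H) : Set H))
    (x : H) (hx : x ∈ (M ⊓ N)ᗮ) : x ∈ Mᗮ ⊔ Nᗮ := by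
  set K : Submodule ℂ H := M ⊔ N with hK
  haveI : CompleteSpace K := hMN.completeSpace_coe
  haveI : CompleteSpace M := hM.completeSpace_coe
  haveI : CompleteSpace N := hN.completeSpace_coe
  -- the addition map T : M × N → K
  let T₀ : (M × N) →ₗ[ℂ] K :=
    { toFun := fun p => ⟨(p.1 : H) + (p.2 : H),
        add_mem (Submodule.mem_sup_left p.1.2) (Submodule.mem_sup_right p.2.2)⟩
      map_add' := by intro p q; ext; simp; abel
      map_smul' := by intro c p; ext; simp }
  have hTbound : ∀ p : M × N, ‖T₀ p‖ ≤ 2 * ‖p‖ := by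
    intro p
    have h1 : ‖(p.1 : H)‖ ≤ ‖p‖ := by
      simpa using (le_max_left ‖p.1‖ ‖p.2‖).trans (le_of_eq (Prod.norm_def p).symm)
    have h2 : ‖(p.2 : H)‖ ≤ ‖p‖ := by
      simpa using (le_max_right ‖p.1‖ ‖p.2‖).trans (le_of_eq (Prod.norm_def p).symm)
    calc ‖T₀ p‖ = ‖(p.1 : H) + (p.2 : H)‖ := rfl
      _ ≤ ‖(p.1 : H)‖ + ‖(p.2 : H)‖ := norm_add_le _ _
      _ ≤ ‖p‖ + ‖p‖ := add_le_add h1 h2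
      _ = 2 * ‖p‖ := by ring
  let T : (M × N) →L[ℂ] K := T₀.mkContinuous 2 hTbound
  have hTsurj : Function.Surjective T := by
    rintro ⟨k, hk⟩
    rw [hK] at hk
    rcases Submodule.mem_sup.mp hk with ⟨m, hm, n, hn, hmn⟩
    exact ⟨(⟨m, hm⟩, ⟨n, hn⟩), Subtype.ext hmn⟩
  obtain ⟨C, hCpos, hC⟩ := T.exists_preimage_norm_le hTsurj
  -- the functional ψ (m,n) = ⟪x, m⟫
  let ψ : (M × N) →L[ℂ] ℂ :=
    (innerSL ℂ x).comp (M.subtypeL.comp (ContinuousLinearMap.fst ℂ M N))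
  have hker : LinearMap.ker (T : (M × N) →ₗ[ℂ] K) ≤ LinearMap.ker (ψ : (M × N) →ₗ[ℂ] ℂ) := by
    rintro ⟨m, n⟩ hp
    have h0 : (m : H) + (n : H) = 0 := congrArg Subtype.val hp
    have hmn : (m : H) = -(n : H) := eq_neg_of_add_eq_zero_left h0
    have hmem : (m : H) ∈ M ⊓ N := ⟨m.2, hmn ▸ N.neg_mem n.2⟩
    have : (inner ℂ x (m : H) : ℂ) = 0 := (Submodule.mem_orthogonal' (M ⊓ N) x).mp hx _ hmem
    simpa [ψ] using this
  -- lift ψ through T using the quotient by the kernel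
  let e := LinearMap.quotKerEquivOfSurjective (T : (M × N) →ₗ[ℂ] K) hTsurj
  let φ₀ : K →ₗ[ℂ] ℂ :=
    ((LinearMap.ker (T : (M × N) →ₗ[ℂ] K)).liftQ (ψ : (M × N) →ₗ[ℂ] ℂ) hker).comp
      e.symm.toLinearMap
  have hfact : ∀ p : M × N, φ₀ (T p) = ψ p := by
    intro p
    have he : e (Submodule.Quotient.mk p) = T p := rfl
    simp only [φ₀, LinearMap.comp_apply, LinearEquiv.coe_coe, ← he,
      LinearEquiv.symm_apply_apply, Submodule.liftQ_apply]
    simp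
  have hbound : ∀ k : K, ‖φ₀ k‖ ≤ (‖ψ‖ * C) * ‖k‖ := by
    intro k
    obtain ⟨p, hpk, hpn⟩ := hC k
    calc ‖φ₀ k‖ = ‖ψ p‖ := by rw [← hpk, hfact]
      _ ≤ ‖ψ‖ * ‖p‖ := ψ.le_opNorm p
      _ ≤ ‖ψ‖ * (C * ‖k‖) := by
          exact mul_le_mul_of_nonneg_left hpn (norm_nonneg ψ)
      _ = (‖ψ‖ * C) * ‖k‖ := by ring
  let φ : K →L[ℂ] ℂ := φ₀.mkContinuous (‖ψ‖ * C) hbound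
  -- Riesz representation
  set y : K := (InnerProductSpace.toDual ℂ K).symm φ with hy
  have hyk : ∀ k : K, (inner ℂ y k : ℂ) = φ k := by
    intro k
    rw [← InnerProductSpace.toDual_apply_apply, hy, LinearIsometryEquiv.apply_symm_apply]
  have hyM : ∀ m : H, m ∈ M → (inner ℂ (y : H) m : ℂ) = inner ℂ x m := by
    intro m hm
    have := hyk (T (⟨m, hm⟩, 0))
    rw [Submodule.coe_inner] at this
    have hφ : φ (T (⟨m, hm⟩, 0)) = ψ (⟨m, hm⟩, 0) := hfact _
    rw [hφ] at this
    simpa [T, T₀, ψ] using this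
  have hyN : ∀ n : H, n ∈ N → (inner ℂ (y : H) n : ℂ) = 0 := by
    intro n hn
    have := hyk (T (0, ⟨n, hn⟩))
    rw [Submodule.coe_inner] at this
    have hφ : φ (T (0, ⟨n, hn⟩)) = ψ (0, ⟨n, hn⟩) := hfact _
    rw [hφ] at this
    simpa [T, T₀, ψ] using this
  have hxy : x - (y : H) ∈ Mᗮ := by
    rw [Submodule.mem_orthogonal']
    intro u hu
    rw [inner_sub_left, hyM u hu, sub_self]
  have hyN' : (y : H) ∈ Nᗮ := by
    rw [Submodule.mem_orthogonal']
    intro u hu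
    exact hyN u hu
  exact Submodule.mem_sup.mpr ⟨x - y, hxy, y, hyN', by abel⟩

/-- If `M`, `N` are closed subspaces of a Hilbert space with `M + N` closed, then
`(M ∩ N)ᗮ = Mᗮ + Nᗮ`; in particular `Mᗮ + Nᗮ` is closed. -/
theorem orthogonal_inf_eq_sup_orthogonal (M N : Submodule ℂ H)
    (hM : IsClosed (M : Set H)) (hN : IsClosed (N : Set H))
    (hMN : IsClosed ((M ⊔ N : Submodule ℂ H) : Set H)) :
    (M ⊓ N)ᗮ = Mᗮ ⊔ Nᗮ ∧ IsClosed ((Mᗮ ⊔ Nᗮ : Submodule ℂ H) : Set H) := by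
  have heq : (M ⊓ N)ᗮ = Mᗮ ⊔ Nᗮ := by
    refine le_antisymm (fun x hx => key_mem M N hM hN hMN x hx) ?_
    exact sup_le (Submodule.orthogonal_le inf_le_left) (Submodule.orthogonal_le inf_le_right)
  exact ⟨heq, heq ▸ Submodule.isClosed_orthogonal _⟩
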